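/- arXiv:1904.10565 — 2 statements merged into one kernel-verified Lean document; each statement's English description precedes it below -/
import Mathlib

section
/- Every group homomorphism from a Polish topological group to the integers (with the discrete topology) is continuous. -/
open Filter Topology Metric

/-! Auxiliary machinery for Dudley's automatic continuity theorem. -/

/-- Recursion along full histories. -/
noncomputable def histSeq {D : Sort*} (F : (n : ℕ) → ((i : ℕ) → i < n → D) → D) : ℕ → D :=
  WellFounded.fix (wellFounded_lt (α := ℕ)) F

theorem histSeq_eq {D : Sort*} (F : (n : ℕ) → ((i : ℕ) → i < n → D) → D) (n : ℕ) :
    histSeq F n = F n (fun i _ => histSeq F i) :=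
  WellFounded.fix_eq _ _ _

/-- Nested power products: `pcSeq h N k x = g_N * (g_{N+1} * ( ... * x^{q_{N+k-1}})^{q_{N+1}})^{q_N}`
where `h i = (g_i, q_i)`. -/
def pcSeq {G : Type*} [Monoid G] (h : ℕ → G × ℕ) : ℕ → ℕ → G → G
  | _, 0, x => x
  | N, k+1, x => (h N).1 * (pcSeq h (N+1) k x) ^ (h N).2

theorem pcSeq_congr {G : Type*} [Monoid G] (h h' : ℕ → G × ℕ) :
    ∀ (k N : ℕ) (x : G), (∀ i, N ≤ i → i < N + k → h i = h' i) →
      pcSeq h N k x = pcSeq h' N k x := by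
  intro k
  induction k with
  | zero => intro N x _; rfl
  | succ k ih =>
    intro N x he
    have h0 : h N = h' N := he N le_rfl (by omega)
    have h1 : pcSeq h (N+1) k x = pcSeq h' (N+1) k x :=
      ih (N+1) x (fun i hi hi' => he i (by omega) (by omega))
    simp only [pcSeq, h0, h1]

theorem pcSeq_add {G : Type*} [Monoid G] (h : ℕ → G × ℕ) :
    ∀ (k N j : ℕ) (x : G), pcSeq h N (k + j) x = pcSeq h N k (pcSeq h (N + k) j x) := by
  intro k
  induction k with
  | zero => intro N j x; simp [pcSeq]
  | succ k ih =>
    intro N j x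
    have : k + 1 + j = (k + j) + 1 := by omega
    rw [this]
    show (h N).1 * (pcSeq h (N+1) (k + j) x) ^ (h N).2
        = pcSeq h N (k+1) (pcSeq h (N + (k+1)) j x)
    rw [ih (N+1) j x]
    have : N + 1 + k = N + (k + 1) := by omega
    rw [this]
    rfl

theorem pcSeq_continuous {G : Type*} [Monoid G] [TopologicalSpace G] [ContinuousMul G]
    (h : ℕ → G × ℕ) : ∀ (k N : ℕ), Continuous (fun x => pcSeq h N k x) := by
  intro k
  induction k with
  | zero => intro N; exact continuous_id
  | succ k ih =>
    intro N
    show Continuous fun x => (h N).1 * (pcSeq h (N+1) k x) ^ (h N).2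
    exact continuous_const.mul ((ih (N+1)).pow _)

/-- The arithmetic core: no integer sequences can satisfy Dudley's recursion. -/
theorem dudley_int_aux :
    ∀ (C : ℕ) (a b : ℕ → ℤ), (a 0).natAbs ≤ C → (∀ n, b n ≠ 0) →
      (∀ n, a n = b n + (2 * |b n| + 1) * a (n + 1)) → False := by
  intro C
  induction C with
  | zero =>
    intro a b h0 hb hrec
    have ha0 : a 0 = 0 := by omega
    have h := hrec 0
    rw [ha0] at h
    have hb0 : (1:ℤ) ≤ |b 0| := Int.one_le_abs (hb 0)
    rcases eq_or_ne (a 1) 0 with h1 | h1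
    · rw [h1] at h; simp at h; exact hb 0 h.symm
    · have h1' : (1:ℤ) ≤ |a 1| := Int.one_le_abs h1
      have hb0e : b 0 = -((2 * |b 0| + 1) * a 1) := by linarith
      have he : |b 0| = (2 * |b 0| + 1) * |a 1| := by
        conv_lhs => rw [hb0e]
        rw [abs_neg, abs_mul, abs_of_pos (by linarith : (0:ℤ) < 2 * |b 0| + 1)]
      nlinarith
  | succ C ih =>
    intro a b h0 hb hrec
    by_cases hA : (a 1).natAbs ≤ C
    · exact ih (fun n => a (n+1)) (fun n => b (n+1)) hA (fun n => hb (n+1))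
        (fun n => hrec (n+1))
    · -- |a 1| ≥ C + 1, derive a contradiction
      have hA' : C + 1 ≤ (a 1).natAbs := by omega
      have hA1 : (C : ℤ) + 1 ≤ |a 1| := by
        rw [Int.abs_eq_natAbs]; exact_mod_cast hA'
      have hb0 : (1:ℤ) ≤ |b 0| := Int.one_le_abs (hb 0)
      have h0' : |a 0| ≤ (C : ℤ) + 1 := by
        rw [Int.abs_eq_natAbs]; exact_mod_cast h0
      have h := hrec 0
      have habs : |(2 * |b 0| + 1) * a 1| ≤ |a 0| + |b 0| := by
        have : (2 * |b 0| + 1) * a 1 = a 0 - b 0 := by linarith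
        rw [this]
        exact (abs_sub _ _)
      rw [abs_mul, abs_of_pos (by linarith : (0:ℤ) < 2 * |b 0| + 1)] at habs
      nlinarith

/-- The "goodness" predicate for the stage-`n` data in Dudley's construction.
`d n = (ε_n, g_n, q_n)`. -/
def DudleyGood {G : Type*} [Group G] [MetricSpace G] (φ : G → ℤ) (n : ℕ)
    (d : ℕ → ℝ × G × ℕ) : Prop :=
  0 < (d n).1 ∧
  dist (d n).2.1 1 < (d n).1 ∧
  φ (d n).2.1 ≠ 0 ∧
  (d n).2.2 = 2 * (φ (d n).2.1).natAbs + 1 ∧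
  (∀ N, N ≤ n → ∀ x : G, dist x 1 ≤ (d n).1 →
    dist (pcSeq (fun i => (d i).2) N (n - N) x) (pcSeq (fun i => (d i).2) N (n - N) 1)
      ≤ (1/2 : ℝ)^n) ∧
  (∀ m, n = m + 1 → ∀ x : G, dist x 1 ≤ (d n).1 →
    dist ((d m).2.1 * x ^ (d m).2.2) 1 < (d m).1)

theorem dudleyGood_congr {G : Type*} [Group G] [MetricSpace G] (φ : G → ℤ) (n : ℕ)
    (d d' : ℕ → ℝ × G × ℕ) (he : ∀ i, i ≤ n → d i = d' i) :
    DudleyGood φ n d → DudleyGood φ n d' := by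
  intro hg
  obtain ⟨p1, p2, p3, p4, p5, p6⟩ := hg
  have hn : d n = d' n := he n le_rfl
  refine ⟨by rw [← hn]; exact p1, by rw [← hn]; exact p2, by rw [← hn]; exact p3,
    by rw [← hn]; exact p4, ?_, ?_⟩
  · intro N hN x hx
    have hpc : ∀ y : G, pcSeq (fun i => (d' i).2) N (n - N) y
        = pcSeq (fun i => (d i).2) N (n - N) y := by
      intro y
      exact pcSeq_congr _ _ (n - N) N y (fun i hi hi' => by rw [he i (by omega)])
    rw [hpc, hpc]
    exact p5 N hN x (by rw [hn]; exact hx)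
  · intro m hm x hx
    have hmn : d m = d' m := he m (by omega)
    rw [← hmn]
    exact p6 m hm x (by rw [hn]; exact hx)

theorem dudleyGood_step {G : Type*} [Group G] [MetricSpace G] [IsTopologicalGroup G]
    (φ : G → ℤ)
    (hdense : ∀ ε : ℝ, 0 < ε → ∃ x : G, dist x 1 < ε ∧ φ x ≠ 0)
    (n : ℕ) (d : ℕ → ℝ × G × ℕ) (hprev : ∀ i, i < n → DudleyGood φ i d) :
    ∃ v, DudleyGood φ n (Function.update d n v) := by
  classical
  set hh : ℕ → G × ℕ := fun i => (d i).2 with hhh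
  -- continuity bounds for the already-constructed maps
  have hcont : ∀ N : ℕ, ∃ δ : ℝ, 0 < δ ∧ ∀ x : G, dist x 1 ≤ δ →
      dist (pcSeq hh N (n - N) x) (pcSeq hh N (n - N) 1) ≤ (1/2 : ℝ)^n := by
    intro N
    have hc : ContinuousAt (fun x => pcSeq hh N (n - N) x) 1 :=
      (pcSeq_continuous hh (n - N) N).continuousAt
    rw [Metric.continuousAt_iff] at hc
    obtain ⟨δ, hδ, hδ'⟩ := hc ((1/2 : ℝ)^n) (by positivity)
    exact ⟨δ/2, by linarith, fun x hx => (hδ' (lt_of_le_of_lt hx (by linarith))).le⟩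
  choose δf hδf hδf' using hcont
  -- bound coming from the previous stage
  have hstep : ∃ δ' : ℝ, 0 < δ' ∧ ∀ m, n = m + 1 → ∀ x : G, dist x 1 ≤ δ' →
      dist ((d m).2.1 * x ^ (d m).2.2) 1 < (d m).1 := by
    rcases n with _ | m
    · exact ⟨1, one_pos, fun m h => by omega⟩
    · obtain ⟨q1, q2, _, _, _, _⟩ := hprev m (by omega)
      have hc : ContinuousAt (fun x : G => (d m).2.1 * x ^ (d m).2.2) 1 :=
        (continuous_const.mul (continuous_pow _)).continuousAt
      rw [Metric.continuousAt_iff] at hc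
      obtain ⟨δ, hδ, hδ'⟩ := hc ((d m).1 - dist (d m).2.1 1) (by linarith)
      refine ⟨δ/2, by linarith, ?_⟩
      intro m' hm' x hx
      have hm'' : m' = m := by omega
      subst hm''
      have := hδ' (x := x) (lt_of_le_of_lt hx (by linarith))
      rw [one_pow, mul_one] at this
      calc dist ((d m').2.1 * x ^ (d m').2.2) 1
          ≤ dist ((d m').2.1 * x ^ (d m').2.2) ((d m').2.1) + dist ((d m').2.1) 1 :=
            dist_triangle _ _ _
        _ < ((d m').1 - dist (d m').2.1 1) + dist ((d m').2.1) 1 := by linarith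
        _ = (d m').1 := by ring
  obtain ⟨δ', hδ'pos, hδ'prop⟩ := hstep
  -- the new ε
  set εc : ℝ := (Finset.range (n+1)).inf' ⟨0, by simp⟩ δf with hεc
  have hεc_pos : 0 < εc := by
    rw [hεc]
    exact (Finset.lt_inf'_iff _).2 fun i _ => hδf i
  set ε : ℝ := min εc δ' with hε
  have hεpos : 0 < ε := lt_min hεc_pos hδ'pos
  obtain ⟨g, hg, hgφ⟩ := hdense ε hεpos
  refine ⟨(ε, g, 2 * (φ g).natAbs + 1), ?_, ?_, ?_, ?_, ?_, ?_⟩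
  · simp only [Function.update_self]; exact hεpos
  · simp only [Function.update_self]; exact hg
  · simp only [Function.update_self]; exact hgφ
  · simp only [Function.update_self]
  · simp only [Function.update_self]
    intro N hN x hx
    have hpc : ∀ y : G, pcSeq (fun i => ((Function.update d n (ε, g, 2 * (φ g).natAbs + 1)) i).2)
        N (n - N) y = pcSeq hh N (n - N) y := by
      intro y
      refine pcSeq_congr _ _ (n - N) N y (fun i hi hi' => ?_)
      have : i ≠ n := by omega
      rw [Function.update_of_ne this]
    rw [hpc, hpc]
    refine hδf' N x (le_trans hx ?_)
    exact le_trans (min_le_left _ _) (Finset.inf'_le _ (Finset.mem_range.2 (by omega)))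
  · simp only [Function.update_self]
    intro m hm x hx
    have hmne : m ≠ n := by omega
    rw [Function.update_of_ne hmne]
    exact hδ'prop m hm x (le_trans hx (min_le_right _ _))

/-- Dudley's automatic continuity theorem specialized to `ℤ`:
every group homomorphism from a Polish group to the integers
(with the discrete topology) is continuous. -/
theorem dudley_automatic_continuity
    (G : Type*) [Group G] [TopologicalSpace G] [IsTopologicalGroup G]
    [PolishSpace G] (f : G →* Multiplicative ℤ) :
    Continuous f := by
  classical
  by_contra hc
  letI := TopologicalSpace.upgradeIsCompletelyMetrizable G
  set φ : G → ℤ := fun x => Multiplicative.toAdd (f x) with hφdef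
  have hφ_mul : ∀ x y : G, φ (x * y) = φ x + φ y := by
    intro x y; simp [hφdef, map_mul]
  have hφ_pow : ∀ (x : G) (k : ℕ), φ (x ^ k) = (k : ℤ) * φ x := by
    intro x k; simp [hφdef, map_pow, toAdd_pow]
  have hne : ∀ x : G, f x ≠ 1 ↔ φ x ≠ 0 := by
    intro x
    constructor
    · intro h h0
      apply h
      have : Multiplicative.toAdd (f x) = Multiplicative.toAdd (1 : Multiplicative ℤ) := by
        simpa [hφdef] using h0
      exact Multiplicative.toAdd.injective this
    · intro h h1
      apply h
      rw [hφdef]; simp [h1]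
  -- f is not continuous at 1
  have hnot : ¬ ContinuousAt f (1 : G) := fun h => hc (continuous_of_continuousAt_one f h)
  have hdense : ∀ ε : ℝ, 0 < ε → ∃ x : G, dist x 1 < ε ∧ φ x ≠ 0 := by
    intro ε hε
    by_contra hno
    push_neg at hno
    apply hnot
    have hmem : f ⁻¹' {1} ∈ 𝓝 (1 : G) := by
      refine mem_of_superset (Metric.ball_mem_nhds 1 hε) ?_
      intro x hx
      have := hno x (by simpa [Metric.mem_ball] using hx)
      have : f x = 1 := by
        by_contra hcon
        exact ((hne x).1 hcon) (by_contra fun h2 => hcon (by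
          exact absurd this (by simpa using h2)))
      simpa using this
    unfold ContinuousAt
    rw [show 𝓝 (f 1) = pure (f 1) by rw [nhds_discrete]]
    rw [tendsto_pure]
    filter_upwards [hmem] with x hx
    rw [map_one]
    simpa using hx
  -- the recursive construction
  set F : (n : ℕ) → ((i : ℕ) → i < n → ℝ × G × ℕ) → ℝ × G × ℕ := fun n prev =>
    if h : ∃ v, DudleyGood φ n
        (Function.update (fun i => if hi : i < n then prev i hi else ((1:ℝ), (1:G), 1)) n v)
    then h.choose else ((1:ℝ), (1:G), 1) with hF
  set d : ℕ → ℝ × G × ℕ := histSeq F with hd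
  have hgood : ∀ n, DudleyGood φ n d := by
    intro n
    induction n using Nat.strong_induction_on with
    | _ n IH =>
      have hdn : d n = F n (fun i _ => d i) := histSeq_eq F n
      set E : ℕ → ℝ × G × ℕ := fun i => if hi : i < n then d i else ((1:ℝ), (1:G), 1) with hE
      have hex : ∃ v, DudleyGood φ n (Function.update E n v) := by
        apply dudleyGood_step φ hdense n E
        intro i hi
        refine dudleyGood_congr φ i d E (fun j hj => ?_) (IH i hi)
        rw [hE]
        simp only [dif_pos (by omega : j < n)]
      rw [hF] at hdn
      simp only at hdn
      rw [dif_pos hex] at hdn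
      have hspec := hex.choose_spec
      rw [← hdn] at hspec
      refine dudleyGood_congr φ n (Function.update E n (d n)) d (fun j hj => ?_) hspec
      rcases eq_or_lt_of_le hj with rfl | hj'
      · rw [Function.update_self]
      · rw [Function.update_of_ne (by omega), hE]
        simp only [dif_pos hj']
  -- notation
  set hh : ℕ → G × ℕ := fun i => (d i).2 with hhh
  have hq : ∀ n, (hh n).2 = 2 * (φ (hh n).1).natAbs + 1 := fun n => (hgood n).2.2.2.1
  have hbne : ∀ n, φ (hh n).1 ≠ 0 := fun n => (hgood n).2.2.1
  -- invariant: all tail products stay in the ε-balls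
  have hinv : ∀ (k m : ℕ), dist (pcSeq hh m k 1) 1 < (d m).1 := by
    intro k
    induction k with
    | zero => intro m; simpa [pcSeq] using (hgood m).1
    | succ k ih =>
      intro m
      show dist ((hh m).1 * (pcSeq hh (m+1) k 1) ^ (hh m).2) 1 < (d m).1
      exact (hgood (m+1)).2.2.2.2.2 m rfl _ (ih (m+1)).le
  -- Cauchy sequences
  have hcauchy : ∀ N, CauchySeq (fun k => pcSeq hh N k 1) := by
    intro N
    rw [Metric.cauchySeq_iff']
    intro ε' hε'
    obtain ⟨K, hK⟩ := exists_pow_lt_of_lt_one hε' (by norm_num : (1/2 : ℝ) < 1)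
    refine ⟨K, fun k hk => ?_⟩
    obtain ⟨j, rfl⟩ := Nat.exists_eq_add_of_le hk
    rw [pcSeq_add hh K N j 1]
    have h4 := (hgood (N + K)).2.2.2.2.1 N (by omega) (pcSeq hh (N + K) j 1)
      (hinv j (N + K)).le
    rw [Nat.add_sub_cancel_left] at h4
    calc dist (pcSeq hh N K (pcSeq hh (N + K) j 1)) (pcSeq hh N K 1)
        ≤ (1/2 : ℝ)^(N + K) := h4
      _ ≤ (1/2 : ℝ)^K := pow_le_pow_of_le_one (by norm_num) (by norm_num) (by omega)
      _ < ε' := hK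
  -- limits
  have hlim : ∀ N, ∃ w : G, Tendsto (fun k => pcSeq hh N k 1) atTop (𝓝 w) :=
    fun N => cauchySeq_tendsto_of_complete (hcauchy N)
  choose w hw using hlim
  -- the recursion for the limits
  have hwrec : ∀ N, w N = (hh N).1 * (w (N+1)) ^ (hh N).2 := by
    intro N
    have h1 : Tendsto (fun k => pcSeq hh N (k + 1) 1) atTop (𝓝 (w N)) :=
      (hw N).comp (tendsto_add_atTop_nat 1)
    have h2 : Tendsto (fun k => (hh N).1 * (pcSeq hh (N+1) k 1) ^ (hh N).2) atTop
        (𝓝 ((hh N).1 * (w (N+1)) ^ (hh N).2)) :=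
      (continuous_const.mul (continuous_pow _)).continuousAt.tendsto.comp (hw (N+1))
    have heq : (fun k => pcSeq hh N (k + 1) 1)
        = fun k => (hh N).1 * (pcSeq hh (N+1) k 1) ^ (hh N).2 := rfl
    rw [heq] at h1
    exact tendsto_nhds_unique h1 h2
  -- transfer to ℤ and contradict the arithmetic lemma
  set a : ℕ → ℤ := fun N => φ (w N) with ha
  set b : ℕ → ℤ := fun N => φ (hh N).1 with hb
  have hrec : ∀ n, a n = b n + (2 * |b n| + 1) * a (n + 1) := by
    intro n
    rw [ha, hb]
    simp only
    rw [hwrec n, hφ_mul, hφ_pow, hq n]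
    have : ((2 * (φ (hh n).1).natAbs + 1 : ℕ) : ℤ) = 2 * |φ (hh n).1| + 1 := by
      rw [Int.abs_eq_natAbs]
      push_cast
      ring
    rw [this]
  exact dudley_int_aux (a 0).natAbs a b le_rfl (fun n => hbne n) hrec
end

section
/- Let (A_n) be a sequence of free abelian groups with A_n having basis {τ, ∂_1^{(n)}, …, ∂_{m_n}^{(n)}} with m_n ≥ 1, and maps A_n → A_{n+1} each of one of the forms: (i) kill one basis element ∂_i (cap with punctured disk), (ii) rename ∂_i to a new basis element ∂_i' (punctured annulus), or (iii) replace ∂_i by a sum ∂_{i_0} + ∂_{i_1} of two new basis elements (pair of pants), fixing all other basis elements and τ. Suppose (f_n : A_n → ℤ) is a compatible sequence of homomorphisms (f_{n+1} composed with the map A_n → A_{n+1} equals f_n) and f_N(∂_i^{(N)}) > 0 for some N and i. Then there exists an infinite sequence of indices n_1 < n_2 < ⋯ and basis elements ∂^{(n_k)} with f_{n_k}(∂^{(n_k)}) > 0, such that each ∂^{(n_k)} arises from ∂^{(n_{k-1})} under the transition maps. -/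
open Finsupp

/-- Each `A n` is the free abelian group `Option (ι n) →₀ ℤ`, with
basis element `Finsupp.single none 1` playing the role of `τ` and the elements
`Finsupp.single (some i) 1` for `i : ι n` playing the role of the boundary classes
`∂_i`.  Every transition map `T n : A n → A (n+1)` fixes `τ`, sends all boundary
basis elements except one distinguished element `∂_{i₀}` bijectively (via an
embedding `e`) to boundary basis elements of `A (n+1)`, and sends `∂_{i₀}` either
to `0` (capping with a punctured disk), to a single new basis element (gluing a
punctured annulus), or to a sum of two new basis elements (gluing a pair of
pants).  If a compatible family of homomorphisms `f n : A n → ℤ` is positive on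
some boundary class of `A N`, then there is an infinite chain of boundary
classes, each arising from the previous one under the transition maps, on which
the homomorphisms are positive. -/
theorem positivity_propagates_in_exhaustion
    (ι : ℕ → Type) [∀ n, Nonempty (ι n)]
    (T : ∀ n : ℕ, (Option (ι n) →₀ ℤ) →+ (Option (ι (n + 1)) →₀ ℤ))
    (hT : ∀ n : ℕ, ∃ (i₀ : ι n) (e : {i : ι n // i ≠ i₀} ↪ ι (n + 1)),
      (T n (single none 1) = single none 1) ∧
      (∀ (i : ι n) (h : i ≠ i₀),
        T n (single (some i) 1) = single (some (e ⟨i, h⟩)) 1) ∧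
      ((T n (single (some i₀) 1) = 0) ∨
       (∃ j : ι (n + 1), (∀ (i : ι n) (h : i ≠ i₀), e ⟨i, h⟩ ≠ j) ∧
          T n (single (some i₀) 1) = single (some j) 1) ∨
       (∃ j₀ j₁ : ι (n + 1), j₀ ≠ j₁ ∧
          (∀ (i : ι n) (h : i ≠ i₀), e ⟨i, h⟩ ≠ j₀ ∧ e ⟨i, h⟩ ≠ j₁) ∧
          T n (single (some i₀) 1) = single (some j₀) 1 + single (some j₁) 1)))
    (f : ∀ n : ℕ, (Option (ι n) →₀ ℤ) →+ ℤ)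
    (hcompat : ∀ n : ℕ, (f (n + 1)).comp (T n) = f n)
    (N : ℕ) (i : ι N) (hpos : 0 < f N (single (some i) 1)) :
    ∃ b : ∀ k : ℕ, ι (N + k),
      (∀ k : ℕ, 0 < f (N + k) (single (some (b k)) 1)) ∧
      (∀ k : ℕ, (T (N + k) (single (some (b k)) 1)) (some (b (k + 1))) ≠ 0) := by
  have key : ∀ n (i : ι n), 0 < f n (single (some i) 1) →
      ∃ j : ι (n + 1), 0 < f (n + 1) (single (some j) 1) ∧
        (T n (single (some i) 1)) (some j) ≠ 0 := by
    intro n i hi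
    obtain ⟨i₀, e, -, he, hcase⟩ := hT n
    have hc : f (n + 1) (T n (single (some i) 1)) = f n (single (some i) 1) :=
      DFunLike.congr_fun (hcompat n) _
    by_cases h : i = i₀
    · subst h
      rcases hcase with h0 | ⟨j, -, hj⟩ | ⟨j₀, j₁, hne, -, hj⟩
      · rw [h0, map_zero] at hc
        omega
      · refine ⟨j, ?_, ?_⟩
        · rw [hj] at hc; omega
        · rw [hj, Finsupp.single_eq_same]; norm_num
      · rw [hj, map_add] at hc
        rcases lt_or_ge 0 (f (n + 1) (single (some j₀) 1)) with h1 | h1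
        · refine ⟨j₀, h1, ?_⟩
          rw [hj, Finsupp.add_apply, Finsupp.single_eq_same,
            Finsupp.single_eq_of_ne' (by simpa using hne.symm)]
          norm_num
        · refine ⟨j₁, by omega, ?_⟩
          rw [hj, Finsupp.add_apply, Finsupp.single_eq_same,
            Finsupp.single_eq_of_ne' (by simpa using hne)]
          norm_num
    · refine ⟨e ⟨i, h⟩, ?_, ?_⟩
      · rw [he i h] at hc; omega
      · rw [he i h, Finsupp.single_eq_same]; norm_num
  choose g hg1 hg2 using key
  let b : ∀ k : ℕ, {j : ι (N + k) // 0 < f (N + k) (single (some j) 1)} :=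
    fun k => Nat.rec ⟨i, hpos⟩ (fun k p => ⟨g (N + k) p.1 p.2, hg1 _ _ _⟩) k
  exact ⟨fun k => (b k).1, fun k => (b k).2, fun k => hg2 (N + k) (b k).1 (b k).2⟩
end
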